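/- Every division subring of a centrally finite division ring is itself centrally finite; that is, if D is a division ring that is finite-dimensional over its center, then any division subring K of D is finite-dimensional over its own center Z(K). -/

import Mathlib

set_option maxHeartbeats 1000000
set_option synthInstance.maxHeartbeats 400000

section Aux

variable {D : Type*} [DivisionRing D]

/-- The center of `K` viewed as a subfield of `D`. -/
def centerIn (K : Subfield D) : Subfield D where
  carrier := {x | x ∈ K ∧ ∀ y ∈ K, x * y = y * x}
  zero_mem' := ⟨K.zero_mem, by simp⟩
  one_mem' := ⟨K.one_mem, by simp⟩
  add_mem' := by
    rintro a b ⟨ha, hca⟩ ⟨hb, hcb⟩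
    exact ⟨K.add_mem ha hb, fun y hy => by rw [add_mul, mul_add, hca y hy, hcb y hy]⟩
  mul_mem' := by
    rintro a b ⟨ha, hca⟩ ⟨hb, hcb⟩
    refine ⟨K.mul_mem ha hb, fun y hy => ?_⟩
    rw [mul_assoc, hcb y hy, ← mul_assoc, hca y hy, mul_assoc]
  neg_mem' := by
    rintro a ⟨ha, hca⟩
    exact ⟨K.neg_mem ha, fun y hy => by rw [neg_mul, mul_neg, hca y hy]⟩
  inv_mem' := by
    rintro a ⟨ha, hca⟩
    rcases eq_or_ne a 0 with rfl | h0
    · exact ⟨by rw [inv_zero]; exact K.zero_mem,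
        fun y _ => by rw [inv_zero, zero_mul, mul_zero]⟩
    refine ⟨K.inv_mem ha, fun y hy => ?_⟩
    calc a⁻¹ * y = a⁻¹ * (y * a * a⁻¹) := by rw [mul_assoc, mul_inv_cancel₀ h0, mul_one]
      _ = a⁻¹ * (a * y * a⁻¹) := by rw [← hca y hy]
      _ = y * a⁻¹ := by rw [← mul_assoc, ← mul_assoc, inv_mul_cancel₀ h0, one_mul]

theorem mem_centerIn {K : Subfield D} {x : D} :
    x ∈ centerIn K ↔ x ∈ K ∧ ∀ y ∈ K, x * y = y * x := Iff.rfl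

/-- "Star" lemma: if a family `c` of elements centralizing `K` is linearly independent over
the center of `K`, then it is linearly independent over `K`. -/
theorem my_star (K : Subfield D) {ι : Type*}
    (c : ι → D) (hc : ∀ i, ∀ y ∈ K, c i * y = y * c i)
    (hind : ∀ (t : Finset ι) (z : ι → D), (∀ i ∈ t, z i ∈ centerIn K) →
      (∑ i ∈ t, z i * c i = 0) → ∀ i ∈ t, z i = 0) :
    ∀ (s : Finset ι) (a : ι → D), (∀ i, a i ∈ K) →
      (∑ i ∈ s, a i * c i = 0) → ∀ i ∈ s, a i = 0 := by
  classical
  intro s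
  induction s using Finset.strongInductionOn with
  | _ s IH =>
  intro a ha hsum
  by_contra hcon
  push_neg at hcon
  obtain ⟨j, hj, haj⟩ := hcon
  set a' : ι → D := fun i => (a j)⁻¹ * a i with ha'def
  have ha' : ∀ i, a' i ∈ K := fun i => K.mul_mem (K.inv_mem (ha j)) (ha i)
  have ha'j : a' j = 1 := inv_mul_cancel₀ haj
  have hsum' : ∑ i ∈ s, a' i * c i = 0 := by
    have h1 : ∑ i ∈ s, a' i * c i = (a j)⁻¹ * ∑ i ∈ s, a i * c i := by
      rw [Finset.mul_sum]
      exact Finset.sum_congr rfl fun i _ => mul_assoc _ _ _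
    rw [h1, hsum, mul_zero]
  have hcomm : ∀ x ∈ K, ∀ i ∈ s, x * a' i = a' i * x := by
    intro x hx
    set b : ι → D := fun i => x * a' i - a' i * x with hbdef
    have hb : ∀ i, b i ∈ K :=
      fun i => K.sub_mem (K.mul_mem hx (ha' i)) (K.mul_mem (ha' i) hx)
    have hbsumfull : ∑ i ∈ s, b i * c i = 0 := by
      have h2 : ∑ i ∈ s, b i * c i
          = x * (∑ i ∈ s, a' i * c i) - (∑ i ∈ s, a' i * c i) * x := by
        rw [Finset.mul_sum, Finset.sum_mul, ← Finset.sum_sub_distrib]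
        refine Finset.sum_congr rfl fun i _ => ?_
        simp only [hbdef, sub_mul, mul_assoc]
        rw [hc i x hx]
      rw [h2, hsum', mul_zero, zero_mul, sub_zero]
    have hbj : b j = 0 := by simp [hbdef, ha'j]
    have hbsum : ∑ i ∈ s.erase j, b i * c i = 0 := by
      rw [Finset.sum_erase_eq_sub hj, hbsumfull, hbj, zero_mul, sub_zero]
    have hz := IH (s.erase j) (Finset.erase_ssubset hj) b hb hbsum
    intro i hi
    rcases eq_or_ne i j with rfl | hij
    · rw [ha'j, mul_one, one_mul]
    · exact sub_eq_zero.mp (hz i (Finset.mem_erase.mpr ⟨hij, hi⟩))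
  have hFc : ∀ i ∈ s, a' i ∈ centerIn K :=
    fun i hi => ⟨ha' i, fun y hy => (hcomm y hy i hi).symm⟩
  have := hind s a' hFc hsum' j hj
  rw [ha'j] at this
  exact one_ne_zero this

/-- "Key" lemma: if a family `a` of elements of `K` is linearly independent over the center of
`K`, then any relation with coefficients centralizing `K` is trivial. -/
theorem my_key (K : Subfield D) {ι : Type*}
    (a : ι → D) (ha : ∀ i, a i ∈ K)
    (hind : ∀ (t : Finset ι) (z : ι → D), (∀ i ∈ t, z i ∈ centerIn K) →
      (∑ i ∈ t, z i * a i = 0) → ∀ i ∈ t, z i = 0)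
    (s : Finset ι) (c : ι → D) (hc : ∀ i, ∀ y ∈ K, c i * y = y * c i)
    (hsum : ∑ i ∈ s, c i * a i = 0) : ∀ i ∈ s, c i = 0 := by
  classical
  set F : Subfield D := centerIn K with hF
  set W : Submodule F D := Submodule.span F (c '' ↑s) with hW
  haveI : FiniteDimensional F W :=
    FiniteDimensional.span_of_finite F (s.finite_toSet.image c)
  set m := Module.finrank F W with hm
  set b : Module.Basis (Fin m) F W := Module.finBasis F W with hb
  -- every element of W centralizes K
  have hWc : ∀ w : D, ∀ (_ : w ∈ W), ∀ y ∈ K, w * y = y * w := by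
    intro w hw
    refine Submodule.span_induction ?_ ?_ ?_ ?_ hw
    · rintro x ⟨i, hi, rfl⟩ y hy
      exact hc i y hy
    · intro y _; simp
    · intro u v _ _ hu hv y hy
      rw [add_mul, mul_add, hu y hy, hv y hy]
    · intro z u _ hu y hy
      have hzc : (z : D) * y = y * (z : D) := z.2.2 y hy
      rw [Subring.smul_def, smul_eq_mul, mul_assoc, hu y hy, ← mul_assoc, hzc, mul_assoc]
  set e : Fin m → D := fun j => (b j : D) with he'
  have he : ∀ j, ∀ y ∈ K, e j * y = y * e j := fun j => hWc _ (b j).2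
  -- the basis elements are linearly independent over centerIn K (as elements of D)
  have hindE : ∀ (t : Finset (Fin m)) (z : Fin m → D), (∀ j ∈ t, z j ∈ centerIn K) →
      (∑ j ∈ t, z j * e j = 0) → ∀ j ∈ t, z j = 0 := by
    intro t z hz h0
    set zF : Fin m → F := fun j => if h : z j ∈ F then (⟨z j, h⟩ : F) else 0 with hzF
    have h0' : ∑ j ∈ t, zF j • b j = 0 := by
      have hcoe : ((∑ j ∈ t, zF j • b j : W) : D) = ∑ j ∈ t, z j * e j := by
        rw [AddSubmonoidClass.coe_finset_sum]
        refine Finset.sum_congr rfl fun j hj => ?_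
        rw [SetLike.val_smul, Subring.smul_def, smul_eq_mul]
        congr 1
        simp only [hzF, dif_pos (show z j ∈ F from hz j hj)]
      exact ZeroMemClass.coe_eq_zero.mp (by rw [hcoe, h0])
    intro j hj
    have hzero := linearIndependent_iff'.mp b.linearIndependent t zF h0' j hj
    have h2 : z j = ((zF j : F) : D) := by simp only [hzF, dif_pos (show z j ∈ F from hz j hj)]
    rw [h2, hzero]
    simp
  -- coordinates of the `c i` in the basis
  set g : ι → Fin m → D := fun i j =>
    if h : i ∈ s then ((b.repr ⟨c i, Submodule.subset_span (Set.mem_image_of_mem c h)⟩ j : F) : D)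
    else 0 with hg
  have hgF : ∀ i j, g i j ∈ centerIn K := by
    intro i j
    simp only [hg]
    split
    · exact SetLike.coe_mem _
    · exact (centerIn K).zero_mem
  have hrepr : ∀ i ∈ s, c i = ∑ j, g i j * e j := by
    intro i hi
    have h3 := b.sum_repr ⟨c i, Submodule.subset_span (Set.mem_image_of_mem c hi)⟩
    have h4 := congrArg (Subtype.val) h3
    rw [AddSubmonoidClass.coe_finset_sum] at h4
    rw [show c i = (((⟨c i, Submodule.subset_span (Set.mem_image_of_mem c hi)⟩ : W) : D)) from rfl,
      ← h4]
    refine Finset.sum_congr rfl fun j _ => ?_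
    rw [SetLike.val_smul, Subring.smul_def, smul_eq_mul]
    congr 1
    simp only [hg, dif_pos hi]
  -- rewrite the relation
  have h5 : ∑ j, (∑ i ∈ s, g i j * a i) * e j = 0 := by
    have h6 : ∑ i ∈ s, c i * a i = ∑ j, (∑ i ∈ s, g i j * a i) * e j := by
      calc ∑ i ∈ s, c i * a i = ∑ i ∈ s, ∑ j, (g i j * a i) * e j := by
            refine Finset.sum_congr rfl fun i hi => ?_
            rw [hrepr i hi, Finset.sum_mul]
            refine Finset.sum_congr rfl fun j _ => ?_
            rw [mul_assoc, he j (a i) (ha i), ← mul_assoc]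
        _ = ∑ j, ∑ i ∈ s, (g i j * a i) * e j := Finset.sum_comm
        _ = ∑ j, (∑ i ∈ s, g i j * a i) * e j := by
            refine Finset.sum_congr rfl fun j _ => ?_
            rw [Finset.sum_mul]
    rw [← h6, hsum]
  have hA : ∀ j, (∑ i ∈ s, g i j * a i) ∈ K := by
    intro j
    exact K.sum_mem fun i _ => K.mul_mem (hgF i j).1 (ha i)
  have h7 := my_star K e he hindE Finset.univ (fun j => ∑ i ∈ s, g i j * a i)
    (fun j => hA j) h5
  -- each "column" relation is trivial by independence of `a`
  have h8 : ∀ j, ∀ i ∈ s, g i j = 0 := by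
    intro j
    exact hind s (fun i => g i j) (fun i _ => hgF i j) (h7 j (Finset.mem_univ j))
  intro i hi
  rw [hrepr i hi]
  refine Finset.sum_eq_zero fun j _ => ?_
  rw [h8 j i hi, zero_mul]

end Aux

section Main

variable {D : Type*} [DivisionRing D]

/-- A family in `K` that is linearly independent over the center of `K` satisfies no nontrivial
relation with coefficients in `centerIn K`. -/
theorem my_transfer (K : Subfield D) {ι : Type*} (w : ι → K)
    (hw : LinearIndependent (Subring.center K) w) :
    ∀ (t : Finset ι) (z : ι → D), (∀ i ∈ t, z i ∈ centerIn K) →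
      (∑ i ∈ t, z i * (w i : D) = 0) → ∀ i ∈ t, z i = 0 := by
  classical
  intro t z hz h0
  set g' : ι → Subring.center K := fun i =>
    if h : z i ∈ centerIn K then
      ⟨⟨z i, h.1⟩, Subring.mem_center_iff.mpr fun gk => Subtype.ext (by
        have := h.2 (gk : D) gk.2
        push_cast
        exact this.symm)⟩
    else 0 with hg'
  have h0' : ∑ i ∈ t, g' i • w i = 0 := by
    have hcoe : ((∑ i ∈ t, g' i • w i : K) : D) = ∑ i ∈ t, z i * (w i : D) := by
      rw [AddSubmonoidClass.coe_finset_sum]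
      refine Finset.sum_congr rfl fun i hi => ?_
      rw [Subring.smul_def, smul_eq_mul]
      push_cast
      congr 1
      simp only [hg', dif_pos (hz i hi)]
    exact ZeroMemClass.coe_eq_zero.mp (by rw [hcoe, h0])
  intro i hi
  have hzero := linearIndependent_iff'.mp hw t g' h0' i hi
  have h2 : z i = (((g' i : K) : K) : D) := by simp only [hg', dif_pos (hz i hi)]
  rw [h2, hzero]
  simp

end Main

theorem stmt_0 (D : Type*) [DivisionRing D]
    (hD : Module.Finite (Subring.center D) D) (K : Subfield D) :
    Module.Finite (Subring.center K) K := by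
  classical
  set b := Module.Basis.ofVectorSpace (Subring.center K) K with hbdef
  have hli : LinearIndependent (Subring.center D) (fun i => ((b i : K) : D)) := by
    rw [linearIndependent_iff']
    intro t gc hsum i hit
    have hc : ∀ i, ∀ y ∈ K, ((gc i : D)) * y = y * ((gc i : D)) :=
      fun i y _ => (Subring.mem_center_iff.mp (gc i).2 y).symm
    have hsum' : ∑ j ∈ t, ((gc j : D)) * ((b j : K) : D) = 0 := by
      rw [← hsum]
      refine Finset.sum_congr rfl fun j _ => ?_
      rw [Subring.smul_def, smul_eq_mul]
    have := my_key K (fun j => ((b j : K) : D)) (fun j => (b j : K).2)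
      (my_transfer K (fun j => b j) b.linearIndependent)
      t (fun j => ((gc j : D))) hc hsum' i hit
    exact Subtype.ext this
  have h1 := hli.cardinal_le_rank
  have h2 := Module.rank_lt_aleph0 (Subring.center D) D
  have : Finite ↥(Module.Basis.ofVectorSpaceIndex (Subring.center K) K) :=
    Cardinal.mk_lt_aleph0_iff.mp (h1.trans_lt h2)
  exact Module.Finite.of_basis b
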